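/- The center of the braid group B₃ = ⟨σ₁, σ₂ | σ₁σ₂σ₁ = σ₂σ₁σ₂⟩ is exactly the subgroup generated by (σ₁σ₂)³, and this subgroup is infinite cyclic (the element (σ₁σ₂)³ has infinite order). -/

import Mathlib

open Matrix MatrixGroups
open scoped LinearAlgebra.Projectivization

/-- The braid relation `σ₁σ₂σ₁ = σ₂σ₁σ₂`, with `σ₁` and `σ₂` the generators indexed by
`false` and `true` respectively. -/
def braidRels : Set (FreeGroup Bool) :=
  {FreeGroup.of false * FreeGroup.of true * FreeGroup.of false *
    (FreeGroup.of true * FreeGroup.of false * FreeGroup.of true)⁻¹}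

/-- The braid group `B₃ = ⟨σ₁, σ₂ ∣ σ₁σ₂σ₁ = σ₂σ₁σ₂⟩` on three strands. -/
abbrev B₃ := PresentedGroup braidRels

/-- The first standard generator of `B₃`. -/
def σ₁ : B₃ := PresentedGroup.of false

/-- The second standard generator of `B₃`. -/
def σ₂ : B₃ := PresentedGroup.of true

lemma braid : σ₁ * σ₂ * σ₁ = σ₂ * σ₁ * σ₂ := by
  have h : (PresentedGroup.mk braidRels) (FreeGroup.of false * FreeGroup.of true *
      FreeGroup.of false *
      (FreeGroup.of true * FreeGroup.of false * FreeGroup.of true)⁻¹) = 1 := by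
    apply (QuotientGroup.eq_one_iff _).2
    exact Subgroup.subset_normalClosure rfl
  rw [_root_.map_mul, _root_.map_inv, mul_inv_eq_one] at h
  simpa [σ₁, σ₂, PresentedGroup.of, _root_.map_mul] using h

lemma braid' : σ₁ * (σ₂ * σ₁) = σ₂ * (σ₁ * σ₂) := by
  rw [← mul_assoc, braid, mul_assoc]

lemma hDa : (σ₁ * σ₂ * σ₁) * σ₁ = σ₂ * (σ₁ * σ₂ * σ₁) := by
  nth_rewrite 1 [braid]; group

lemma hDb : (σ₁ * σ₂ * σ₁) * σ₂ = σ₁ * (σ₁ * σ₂ * σ₁) := by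
  nth_rewrite 2 [braid]; group

lemma hc2 : (σ₁ * σ₂) ^ 3 = (σ₁ * σ₂ * σ₁) * (σ₁ * σ₂ * σ₁) := by
  nth_rewrite 2 [braid]
  simp only [pow_succ, pow_zero, one_mul, mul_assoc]

lemma c_central : ∀ g : B₃, (σ₁ * σ₂) ^ 3 * g = g * (σ₁ * σ₂) ^ 3 := by
  intro g
  have H : g ∈ Subgroup.centralizer {(σ₁ * σ₂) ^ 3} := by
    apply PresentedGroup.generated_by
    intro j
    rw [Subgroup.mem_centralizer_iff]
    intro h hh
    rcases hh with rfl
    cases j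
    · show (σ₁ * σ₂) ^ 3 * σ₁ = σ₁ * (σ₁ * σ₂) ^ 3
      rw [hc2]
      calc (σ₁ * σ₂ * σ₁) * (σ₁ * σ₂ * σ₁) * σ₁
          = (σ₁ * σ₂ * σ₁) * ((σ₁ * σ₂ * σ₁) * σ₁) := by group
        _ = (σ₁ * σ₂ * σ₁) * (σ₂ * (σ₁ * σ₂ * σ₁)) := by rw [hDa]
        _ = ((σ₁ * σ₂ * σ₁) * σ₂) * (σ₁ * σ₂ * σ₁) := by group
        _ = (σ₁ * (σ₁ * σ₂ * σ₁)) * (σ₁ * σ₂ * σ₁) := by rw [hDb]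
        _ = σ₁ * ((σ₁ * σ₂ * σ₁) * (σ₁ * σ₂ * σ₁)) := by group
    · show (σ₁ * σ₂) ^ 3 * σ₂ = σ₂ * (σ₁ * σ₂) ^ 3
      rw [hc2]
      calc (σ₁ * σ₂ * σ₁) * (σ₁ * σ₂ * σ₁) * σ₂
          = (σ₁ * σ₂ * σ₁) * ((σ₁ * σ₂ * σ₁) * σ₂) := by group
        _ = (σ₁ * σ₂ * σ₁) * (σ₁ * (σ₁ * σ₂ * σ₁)) := by rw [hDb]
        _ = ((σ₁ * σ₂ * σ₁) * σ₁) * (σ₁ * σ₂ * σ₁) := by group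
        _ = (σ₂ * (σ₁ * σ₂ * σ₁)) * (σ₁ * σ₂ * σ₁) := by rw [hDa]
        _ = σ₂ * ((σ₁ * σ₂ * σ₁) * (σ₁ * σ₂ * σ₁)) := by group
  have := Subgroup.mem_centralizer_iff.1 H _ (Set.mem_singleton _)
  exact this

def θ : B₃ →* Multiplicative ℤ :=
  PresentedGroup.toGroup (f := fun _ => Multiplicative.ofAdd (1 : ℤ)) (by
    intro r hr
    rcases hr with rfl
    simp [mul_assoc])

lemma not_finorder : ¬ IsOfFinOrder ((σ₁ * σ₂) ^ 3) := by
  intro h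
  have h2 : IsOfFinOrder (θ ((σ₁ * σ₂) ^ 3)) := θ.isOfFinOrder h
  have h3 : θ ((σ₁ * σ₂) ^ 3) = Multiplicative.ofAdd (6 : ℤ) := by
    have ha : θ σ₁ = Multiplicative.ofAdd (1 : ℤ) := PresentedGroup.toGroup.of _
    have hb : θ σ₂ = Multiplicative.ofAdd (1 : ℤ) := PresentedGroup.toGroup.of _
    rw [_root_.map_pow, _root_.map_mul, ha, hb, ← ofAdd_add, ← ofAdd_nsmul]
    norm_num
  rw [h3] at h2
  rcases isOfFinOrder_iff_pow_eq_one.1 h2 with ⟨n, hn, he⟩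
  rw [← ofAdd_nsmul] at he
  have : (n : ℤ) * 6 = 0 := by
    have := congrArg Multiplicative.toAdd he
    simpa [smul_eq_mul] using this
  omega

abbrev GG : Bool → Type := fun b => Multiplicative (ZMod (cond b 3 2))

instance (b : Bool) : Group (GG b) := inferInstanceAs (Group (Multiplicative (ZMod (cond b 3 2))))
instance (b : Bool) : DecidableEq (GG b) :=
  inferInstanceAs (DecidableEq (Multiplicative (ZMod (cond b 3 2))))

instance (b : Bool) : Fintype (GG b) := by
  cases b
  · exact inferInstanceAs (Fintype (Multiplicative (ZMod 2)))
  · exact inferInstanceAs (Fintype (Multiplicative (ZMod 3)))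

abbrev C6 := Monoid.CoprodI GG

def xx : C6 := Monoid.CoprodI.of (i := false) (Multiplicative.ofAdd (1 : ZMod 2))
def yy : C6 := Monoid.CoprodI.of (i := true) (Multiplicative.ofAdd (1 : ZMod 3))

lemma hxx : xx * xx = 1 := by
  rw [xx, ← _root_.map_mul]
  exact (congrArg Monoid.CoprodI.of (by decide)).trans (_root_.map_one _)

lemma hyy : yy * (yy * yy) = 1 := by
  rw [yy, ← _root_.map_mul, ← _root_.map_mul]
  exact (congrArg Monoid.CoprodI.of (by decide)).trans (_root_.map_one _)

lemma xx_inv : xx⁻¹ = xx := inv_eq_iff_mul_eq_one.2 hxx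

lemma yy_inv : yy⁻¹ = yy * yy := inv_eq_iff_mul_eq_one.2 hyy

lemma hxx' : ∀ z : C6, xx * (xx * z) = z := fun z => by rw [← mul_assoc, hxx, one_mul]

lemma hyy' : ∀ z : C6, yy * (yy * (yy * z)) = z := fun z => by
  calc yy * (yy * (yy * z)) = (yy * (yy * yy)) * z := by simp only [mul_assoc]
    _ = z := by rw [hyy, one_mul]

def ψ : B₃ →* C6 :=
  PresentedGroup.toGroup (f := fun b => if b then xx * (yy * yy) else (yy * yy) * xx) (by
    intro r hr
    rcases hr with rfl
    simp only [_root_.map_mul, _root_.map_inv, FreeGroup.lift_apply_of, if_true, if_false, Bool.false_eq_true,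
      mul_inv_eq_one]
    simp only [mul_assoc, hxx', hyy', hxx, hyy, one_mul, mul_one])

lemma ψa : ψ σ₁ = (yy * yy) * xx := by
  show ψ (PresentedGroup.of false) = _
  rw [ψ, PresentedGroup.toGroup.of]
  simp

lemma ψb : ψ σ₂ = xx * (yy * yy) := by
  show ψ (PresentedGroup.of true) = _
  rw [ψ, PresentedGroup.toGroup.of]
  simp

lemma ψy : ψ (σ₁ * σ₂) = yy := by
  rw [_root_.map_mul, ψa, ψb]
  simp only [mul_assoc, hxx', hyy', hxx, hyy, one_mul, mul_one]

lemma ψx : ψ (σ₁ * σ₂ * σ₁) = xx := by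
  rw [_root_.map_mul, ψy, ψa]
  simp only [mul_assoc, hxx', hyy', hxx, hyy, one_mul, mul_one]

lemma ψ_surj : Function.Surjective ψ := by
  intro z
  have h : z ∈ MonoidHom.range ψ := by
    induction z using Monoid.CoprodI.induction_on with
    | one => exact one_mem _
    | of i m =>
        cases i with
        | false =>
            have hm : m = (Multiplicative.ofAdd (1 : ZMod 2) : GG false) ^ m.toAdd.val := by
              revert m; decide
            rw [hm, _root_.map_pow]
            refine pow_mem ?_ _
            exact ⟨σ₁ * σ₂ * σ₁, ψx⟩
        | true =>
            have hm : m = (Multiplicative.ofAdd (1 : ZMod 3) : GG true) ^ m.toAdd.val := by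
              revert m; decide
            rw [hm, _root_.map_pow]
            refine pow_mem ?_ _
            exact ⟨σ₁ * σ₂, ψy⟩
    | mul a b ha hb => exact mul_mem ha hb
  exact h

def zmodMulHom {G : Type*} [Group G] (n : ℕ) (g : G) (h : g ^ n = 1) :
    Multiplicative (ZMod n) →* G :=
  AddMonoidHom.toMultiplicativeLeft
    (ZMod.lift n ⟨zmultiplesHom (Additive G) (Additive.ofMul g), by
      show ((n : ℤ) • Additive.ofMul g) = 0
      rw [← ofMul_zpow, zpow_natCast, h]
      rfl⟩)

lemma zmodMulHom_one {G : Type*} [Group G] (n : ℕ) (g : G) (h : g ^ n = 1) :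
    zmodMulHom n g h (Multiplicative.ofAdd (1 : ZMod n)) = g := by
  rw [zmodMulHom, AddMonoidHom.coe_toMultiplicativeLeft]
  show Additive.toMul (ZMod.lift n _ (Multiplicative.toAdd (Multiplicative.ofAdd (1 : ZMod n)))) = g
  have h1 : (Multiplicative.toAdd (Multiplicative.ofAdd (1 : ZMod n))) = ((1 : ℤ) : ZMod n) := by
    simp
  rw [h1, ZMod.lift_coe]
  show Additive.toMul ((1 : ℤ) • Additive.ofMul g) = g
  simp

def NN : Subgroup B₃ := Subgroup.zpowers ((σ₁ * σ₂) ^ 3)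

instance NN_normal : NN.Normal := by
  constructor
  intro n hn g
  rcases Subgroup.mem_zpowers_iff.1 hn with ⟨k, rfl⟩
  have hc : Commute ((σ₁ * σ₂) ^ 3) g := c_central g
  have he := (hc.zpow_left k).eq
  have : g * ((σ₁ * σ₂) ^ 3) ^ k * g⁻¹ = ((σ₁ * σ₂) ^ 3) ^ k := by
    rw [← he]; group
  rw [this]
  exact Subgroup.zpow_mem _ (Subgroup.mem_zpowers _) k

abbrev Q := B₃ ⧸ NN

def XQ : Q := QuotientGroup.mk (σ₁ * σ₂ * σ₁)
def YQ : Q := QuotientGroup.mk (σ₁ * σ₂)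

lemma c_mk_one : (QuotientGroup.mk ((σ₁ * σ₂) ^ 3) : Q) = 1 :=
  (QuotientGroup.eq_one_iff _).2 (Subgroup.mem_zpowers _)

lemma hXQ : XQ ^ 2 = 1 := by
  have h : (σ₁ * σ₂ * σ₁) ^ 2 = (σ₁ * σ₂) ^ 3 := by rw [hc2, pow_two]
  rw [XQ, ← QuotientGroup.mk_pow, h, c_mk_one]

lemma hYQ : YQ ^ 3 = 1 := by
  rw [YQ, ← QuotientGroup.mk_pow, c_mk_one]

def χ : C6 →* Q :=
  Monoid.CoprodI.lift (fun b => b.rec (zmodMulHom 2 XQ hXQ) (zmodMulHom 3 YQ hYQ))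

lemma χx : χ xx = XQ := by
  rw [χ, xx, Monoid.CoprodI.lift_of]
  exact zmodMulHom_one 2 XQ hXQ

lemma χy : χ yy = YQ := by
  rw [χ, yy, Monoid.CoprodI.lift_of]
  exact zmodMulHom_one 3 YQ hYQ

lemma χψ : ∀ g : B₃, χ (ψ g) = QuotientGroup.mk g := by
  have key : χ.comp ψ = QuotientGroup.mk' NN := by
    apply PresentedGroup.ext
    intro b
    cases b
    · show χ (ψ σ₁) = QuotientGroup.mk σ₁
      rw [ψa, _root_.map_mul, _root_.map_mul, χx, χy, XQ, YQ,
        ← QuotientGroup.mk_mul, ← QuotientGroup.mk_mul]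
      have h1 : (σ₁ * σ₂) * (σ₁ * σ₂) * (σ₁ * σ₂ * σ₁) = (σ₁ * σ₂) ^ 3 * σ₁ := by
        simp only [pow_succ, pow_zero, one_mul, mul_assoc]
      rw [h1, QuotientGroup.mk_mul, c_mk_one, one_mul]
    · show χ (ψ σ₂) = QuotientGroup.mk σ₂
      rw [ψb, _root_.map_mul, _root_.map_mul, χx, χy, XQ, YQ,
        ← QuotientGroup.mk_mul, ← QuotientGroup.mk_mul]
      have h1 : (σ₁ * σ₂ * σ₁) * ((σ₁ * σ₂) * (σ₁ * σ₂)) =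
          ((σ₁ * σ₂ * σ₁) * (σ₁ * σ₂ * σ₁)) * σ₂ := by
        simp only [mul_assoc]
      rw [h1, ← hc2, QuotientGroup.mk_mul, c_mk_one, one_mul]
  intro g
  exact congrFun (congrArg (fun f => f.toFun) key) g

open Monoid.CoprodI in
lemma prod_eq_head_idx {ι : Type*} [DecidableEq ι] {G : ι → Type*} [∀ i, Group (G i)]
    [∀ i, DecidableEq (G i)] {i₁ j₁ i₂ j₂ : ι}
    (A : NeWord G i₁ j₁) (B : NeWord G i₂ j₂) (h : A.prod = B.prod) : i₁ = i₂ := by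
  have h1 : (Word.equiv (M := G)).symm A.toWord = (Word.equiv (M := G)).symm B.toWord := h
  have hw : A.toWord = B.toWord := (Word.equiv (M := G)).symm.injective h1
  have h2 : A.toList.head? = B.toList.head? := by
    have h3 : A.toWord.toList = B.toWord.toList := congrArg _ hw
    exact congrArg List.head? h3
  rw [NeWord.toList_head?, NeWord.toList_head?, Option.some_inj] at h2
  exact congrArg Sigma.fst h2

open Monoid.CoprodI in
lemma aux_ft (w' : NeWord GG false true) (hz : ∀ g : C6, w'.prod * g = g * w'.prod) : False := by
  obtain ⟨y, hy1, hyt⟩ : ∃ y : GG true, y ≠ 1 ∧ w'.last * y ≠ 1 := by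
    have h : ∀ t : GG true, ∃ y : GG true, y ≠ 1 ∧ t * y ≠ 1 := by decide
    exact h w'.last
  have hcond : y⁻¹ * w'.inv.head ≠ 1 := by
    rw [NeWord.inv_head]
    intro h
    apply hyt
    rw [← _root_.mul_inv_rev, inv_eq_one] at h
    exact h
  let A : NeWord GG true true :=
    NeWord.append (NeWord.singleton y hy1) (by decide : true ≠ false) w'
  let B : NeWord GG true false := NeWord.mulHead w'.inv y⁻¹ hcond
  have hA : A.prod = Monoid.CoprodI.of y * w'.prod := by
    simp [A, NeWord.append_prod, NeWord.prod_singleton]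
  have hB : B.inv.prod = w'.prod * Monoid.CoprodI.of y := by
    simp [B, NeWord.inv_prod, NeWord.mulHead_prod, NeWord.inv_prod, _root_.map_inv, _root_.mul_inv_rev]
  have hAB : B.inv.prod = A.prod := by rw [hA, hB, hz]
  have := prod_eq_head_idx B.inv A hAB
  simp at this

open Monoid.CoprodI in
lemma central_eq_one (z : C6) (hz : ∀ g : C6, z * g = g * z) : z = 1 := by
  by_contra hne
  have hprod : Word.prod (Word.equiv z) = z := (Word.equiv (M := GG)).symm_apply_apply z
  have hwne : Word.equiv z ≠ Word.empty := by
    intro h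
    apply hne
    rw [← hprod, h, Word.prod_empty]
  obtain ⟨i, j, w', hw'⟩ := NeWord.of_word (Word.equiv z) hwne
  have hzw : w'.prod = z := by
    show w'.toWord.prod = z
    rw [hw', hprod]
  by_cases hij : i = j
  · subst hij
    obtain ⟨u, hu⟩ : ∃ u : GG (!i), u ≠ 1 := by
      cases i
      · exact ⟨Multiplicative.ofAdd (1 : ZMod 3), by decide⟩
      · exact ⟨Multiplicative.ofAdd (1 : ZMod 2), by decide⟩
    have hki : (!i) ≠ i := by cases i <;> decide
    let A : NeWord GG (!i) i := NeWord.append (NeWord.singleton u hu) hki w'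
    let B : NeWord GG i (!i) := NeWord.append w' (Ne.symm hki) (NeWord.singleton u hu)
    have hAB : A.prod = B.prod := by
      simp only [A, B, NeWord.append_prod, NeWord.prod_singleton, hzw]
      exact (hz (Monoid.CoprodI.of u)).symm
    exact hki (prod_eq_head_idx A B hAB)
  · have hz' : ∀ g : C6, w'.prod * g = g * w'.prod := fun g => by rw [hzw]; exact hz g
    cases i <;> cases j
    · exact hij rfl
    · exact aux_ft w' hz'
    · refine aux_ft w'.inv fun g => ?_
      rw [NeWord.inv_prod]
      calc w'.prod⁻¹ * g = (g⁻¹ * w'.prod)⁻¹ := by group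
        _ = (w'.prod * g⁻¹)⁻¹ := by rw [hz' g⁻¹]
        _ = g * w'.prod⁻¹ := by group
    · exact hij rfl


/-- The center of `B₃` is exactly the subgroup generated by `(σ₁σ₂)³`, and this subgroup
is infinite cyclic (its generator has infinite order). -/
theorem center_B3_eq_zpowers :
    Subgroup.center B₃ = Subgroup.zpowers ((σ₁ * σ₂) ^ 3) ∧
      ¬ IsOfFinOrder ((σ₁ * σ₂) ^ 3) := by
  constructor
  · apply le_antisymm
    · intro z hzc
      have hzcomm : ∀ g : B₃, z * g = g * z := fun g =>
        (Subgroup.mem_center_iff.1 hzc g).symm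
      have h1 : ψ z = 1 := by
        apply central_eq_one
        intro w
        obtain ⟨g, rfl⟩ := ψ_surj w
        rw [← _root_.map_mul, ← _root_.map_mul, hzcomm]
      have h2 : (QuotientGroup.mk z : Q) = 1 := by
        rw [← χψ z, h1, _root_.map_one]
      have h3 : z ∈ NN := (QuotientGroup.eq_one_iff z).1 h2
      exact h3
    · rw [Subgroup.zpowers_le]
      exact Subgroup.mem_center_iff.2 fun g => (c_central g).symm
  · exact not_finorder
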